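/- Assume J : ℝ^l × ℝ^d → ℝ^d is measurable and p ↦ J(y,p) is continuous for each y ∈ ℝ^l, and let ρ_τ and ρ_ξ be probability densities on (0,∞) and ℝ^l respectively. Then for every open set O ⊆ L = ℝ^{2n}, the function ψ ↦ P(ψ,O) = ∫_0^∞ ∫_{ℝ^l} 1_O(J_L(y; e^{tA}ψ)) ρ_ξ(y) ρ_τ(t) dy dt is lower semicontinuous on L (the weak Feller property). -/

import Mathlib

open Matrix MeasureTheory

/-- Index for the coordinates of one block (particle `i`, component `j`). -/
abbrev PIdx (N d : ℕ) := Fin N × Fin d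

/-- The phase space `L = ℝ^{2n}`, `n = dN`: positions indexed by `Sum.inl`, momenta by
`Sum.inr`. -/
abbrev Phase (N d : ℕ) := (PIdx N d ⊕ PIdx N d) → ℝ

/-- The Hamiltonian matrix `A = [[0, (1/M)I], [−V, 0]]`. -/
noncomputable def hamMatrix {N d : ℕ} (M : ℝ) (V : Matrix (PIdx N d) (PIdx N d) ℝ) :
    Matrix (PIdx N d ⊕ PIdx N d) (PIdx N d ⊕ PIdx N d) ℝ :=
  Matrix.fromBlocks 0 ((1 / M) • 1) (-V) 0

/-- The momentum `p₁ ∈ ℝ^d` of particle 1. -/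
def mom1 {N d : ℕ} (hN : 0 < N) (ψ : Phase N d) : Fin d → ℝ :=
  fun j => ψ (Sum.inr ((⟨0, hN⟩ : Fin N), j))

/-- The collision map on phase space: `J_L(u;(q,p)) = (q,p')` with `p'₁ = J(u,p₁)` and
`p'ᵢ = pᵢ` for `i > 1`. -/
def JL {N d l : ℕ} (hN : 0 < N) (J : (Fin l → ℝ) → (Fin d → ℝ) → (Fin d → ℝ))
    (u : Fin l → ℝ) (ψ : Phase N d) : Phase N d := fun z =>
  match z with
  | Sum.inl x => ψ (Sum.inl x)
  | Sum.inr x => if x.1 = (⟨0, hN⟩ : Fin N) then J u (mom1 hN ψ) x.2 else ψ (Sum.inr x)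

/-- The free flow `e^{tA}ψ`. -/
noncomputable def flow {N d : ℕ} (M : ℝ) (V : Matrix (PIdx N d) (PIdx N d) ℝ) (t : ℝ)
    (ψ : Phase N d) : Phase N d :=
  (NormedSpace.exp (t • hamMatrix M V)).mulVec ψ

/-! ### Auxiliary continuity and measurability lemmas -/

lemma cont_mulVec {n : Type*} [Fintype n] (B : Matrix n n ℝ) :
    Continuous fun ψ : n → ℝ => B.mulVec ψ := by
  refine continuous_pi fun i => ?_
  simp only [Matrix.mulVec, dotProduct]
  exact continuous_finset_sum _ fun j _ => continuous_const.mul (continuous_apply j)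

lemma cont_flow_psi {N d : ℕ} (M : ℝ) (V : Matrix (PIdx N d) (PIdx N d) ℝ) (t : ℝ) :
    Continuous fun ψ : Phase N d => flow M V t ψ := cont_mulVec _

lemma cont_mom1 {N d : ℕ} (hN : 0 < N) : Continuous (mom1 (N := N) (d := d) hN) :=
  continuous_pi fun _ => continuous_apply _

lemma cont_JL {N d l : ℕ} (hN : 0 < N) (J : (Fin l → ℝ) → (Fin d → ℝ) → (Fin d → ℝ))
    (hJcont : ∀ y, Continuous (J y)) (u : Fin l → ℝ) :
    Continuous fun ψ : Phase N d => JL hN J u ψ := by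
  refine continuous_pi fun i => ?_
  rcases i with x | x
  · exact continuous_apply _
  · by_cases hx : x.1 = (⟨0, hN⟩ : Fin N)
    · simp only [JL, hx, if_true]
      exact (continuous_apply x.2).comp ((hJcont u).comp (cont_mom1 hN))
    · simp only [JL, hx, if_false]
      exact continuous_apply _

lemma cont_flow_t {N d : ℕ} (M : ℝ) (V : Matrix (PIdx N d) (PIdx N d) ℝ) (ψ : Phase N d) :
    Continuous fun t : ℝ => flow M V t ψ := by
  letI : NormedRing (Matrix (PIdx N d ⊕ PIdx N d) (PIdx N d ⊕ PIdx N d) ℝ) :=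
    Matrix.linftyOpNormedRing
  letI : NormedAlgebra ℝ (Matrix (PIdx N d ⊕ PIdx N d) (PIdx N d ⊕ PIdx N d) ℝ) :=
    Matrix.linftyOpNormedAlgebra
  have hexp : Continuous fun t : ℝ => NormedSpace.exp (t • hamMatrix M V) :=
    (continuous_iff_continuousAt.2 fun x => (NormedSpace.exp_analytic (𝕂 := ℝ) x).continuousAt).comp
      (continuous_id.smul continuous_const)
  refine continuous_pi fun i => ?_
  simp only [flow, Matrix.mulVec, dotProduct]
  refine continuous_finset_sum _ fun j _ => ?_
  exact (((continuous_apply j).comp ((continuous_apply i).comp hexp))).mul continuous_const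

lemma meas_JLflow {N d l : ℕ} (hN : 0 < N) (M : ℝ) (V : Matrix (PIdx N d) (PIdx N d) ℝ)
    (J : (Fin l → ℝ) → (Fin d → ℝ) → (Fin d → ℝ))
    (hJmeas : Measurable fun y : (Fin l → ℝ) × (Fin d → ℝ) => J y.1 y.2) (ψ : Phase N d) :
    Measurable fun z : ℝ × (Fin l → ℝ) => JL hN J z.2 (flow M V z.1 ψ) := by
  refine measurable_pi_lambda _ fun i => ?_
  rcases i with x | x
  · exact (((continuous_apply (Sum.inl x)).comp (cont_flow_t M V ψ)).measurable).comp
      measurable_fst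
  · by_cases hx : x.1 = (⟨0, hN⟩ : Fin N)
    · simp only [JL, hx, if_true]
      have hm : Continuous fun t : ℝ => mom1 hN (flow M V t ψ) :=
        (cont_mom1 hN).comp (cont_flow_t M V ψ)
      exact (measurable_pi_apply x.2).comp
        (hJmeas.comp (measurable_snd.prodMk (hm.measurable.comp measurable_fst)))
    · simp only [JL, hx, if_false]
      exact (((continuous_apply (Sum.inr x)).comp (cont_flow_t M V ψ)).measurable).comp
        measurable_fst

/-- Weak Feller property of the embedded chain: for every open `O ⊆ L`, the function
`ψ ↦ P(ψ,O) = ∫_0^∞ ∫ 1_O(J_L(y; e^{tA}ψ)) ρ_ξ(y) ρ_τ(t) dy dt` is lower semicontinuous. -/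
theorem weak_feller (N d l : ℕ) (hN : 0 < N) (hd : 0 < d) (M : ℝ) (hM : 0 < M)
    (V : Matrix (PIdx N d) (PIdx N d) ℝ) (hV : V.PosDef)
    (J : (Fin l → ℝ) → (Fin d → ℝ) → (Fin d → ℝ))
    (hJmeas : Measurable fun y : (Fin l → ℝ) × (Fin d → ℝ) => J y.1 y.2)
    (hJcont : ∀ y, Continuous (J y))
    (ρτ : ℝ → ℝ) (hρτmeas : Measurable ρτ) (hρτ0 : ∀ t, 0 ≤ ρτ t)
    (hρτint : ∫ t in Set.Ioi (0 : ℝ), ρτ t = 1)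
    (ρξ : (Fin l → ℝ) → ℝ) (hρξmeas : Measurable ρξ) (hρξ0 : ∀ y, 0 ≤ ρξ y)
    (hρξint : ∫ y, ρξ y = 1) :
    ∀ O : Set (Phase N d), IsOpen O →
      LowerSemicontinuous fun ψ : Phase N d =>
        ∫ t in Set.Ioi (0 : ℝ),
          (∫ y, Set.indicator O (fun _ => (1 : ℝ)) (JL hN J y (flow M V t ψ)) * ρξ y) * ρτ t := by
  intro O hO
  have _Ydummy : True := trivial
  set μτ : Measure ℝ := volume.restrict (Set.Ioi (0 : ℝ)) with hμτ
  -- the random map, as a function of `z = (t, y)`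
  set Ψ : Phase N d → ℝ × (Fin l → ℝ) → Phase N d := fun ψ z => JL hN J z.2 (flow M V z.1 ψ) with hΨ
  set e : Phase N d → ENNReal := Set.indicator O fun _ => 1 with he
  have hemeas : Measurable e := measurable_const.indicator hO.measurableSet
  have hΨmeas : ∀ ψ, Measurable (Ψ ψ) := fun ψ => meas_JLflow hN M V J hJmeas ψ
  -- integrability of the densities
  have hρξInt : Integrable ρξ := by
    by_contra h
    rw [integral_undef h] at hρξint; norm_num at hρξint
  have hρτInt : Integrable ρτ μτ := by
    by_contra h
    rw [integral_undef h] at hρτint; norm_num at hρτint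
  have hBξ : ∫⁻ y, ENNReal.ofReal (ρξ y) = 1 := by
    rw [← ofReal_integral_eq_lintegral_ofReal hρξInt (Filter.Eventually.of_forall hρξ0), hρξint,
      ENNReal.ofReal_one]
  have hBτ : ∫⁻ t, ENNReal.ofReal (ρτ t) ∂μτ = 1 := by
    rw [← ofReal_integral_eq_lintegral_ofReal hρτInt (Filter.Eventually.of_forall hρτ0), hμτ]
    rw [hρτint, ENNReal.ofReal_one]
  -- the inner `lintegral`
  set K : Phase N d → ℝ → ENNReal :=
    fun ψ t => ∫⁻ y, e (Ψ ψ (t, y)) * ENNReal.ofReal (ρξ y) with hK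
  have hKmeas : ∀ ψ, Measurable (K ψ) := by
    intro ψ
    exact Measurable.lintegral_prod_right'
      ((hemeas.comp (hΨmeas ψ)).mul
        ((ENNReal.measurable_ofReal.comp hρξmeas).comp measurable_snd))
  have hKle : ∀ ψ t, K ψ t ≤ 1 := by
    intro ψ t
    calc K ψ t ≤ ∫⁻ y, ENNReal.ofReal (ρξ y) := by
          refine lintegral_mono fun y => ?_
          by_cases h : Ψ ψ (t, y) ∈ O <;>
            simp [he, Set.indicator_of_mem, Set.indicator_of_notMem, h]
      _ = 1 := hBξ
  have hKne : ∀ ψ t, K ψ t ≠ ⊤ := fun ψ t => (lt_of_le_of_lt (hKle ψ t) ENNReal.one_lt_top).ne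
  -- the outer `lintegral`
  set G : Phase N d → ENNReal := fun ψ => ∫⁻ t, K ψ t * ENNReal.ofReal (ρτ t) ∂μτ with hG
  have hGle : ∀ ψ, G ψ ≤ 1 := by
    intro ψ
    calc G ψ ≤ ∫⁻ t, 1 * ENNReal.ofReal (ρτ t) ∂μτ :=
        lintegral_mono fun t => mul_le_mul_left (hKle ψ t) _
      _ = 1 := by simpa using hBτ
  have hGne : ∀ ψ, G ψ ≠ ⊤ := fun ψ => (lt_of_le_of_lt (hGle ψ) ENNReal.one_lt_top).ne
  -- Step A: the inner Bochner integral equals `(K ψ t).toReal`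
  have keyA : ∀ ψ t,
      (∫ y, Set.indicator O (fun _ => (1 : ℝ)) (JL hN J y (flow M V t ψ)) * ρξ y)
        = (K ψ t).toReal := by
    intro ψ t
    have hmeasy : Measurable fun y : (Fin l → ℝ) =>
        Set.indicator O (fun _ => (1 : ℝ)) (Ψ ψ (t, y)) * ρξ y :=
      ((measurable_const.indicator hO.measurableSet).comp
        ((hΨmeas ψ).comp (measurable_const.prodMk measurable_id))).mul hρξmeas
    have hnn : 0 ≤ᵐ[volume] fun y : (Fin l → ℝ) =>
        Set.indicator O (fun _ => (1 : ℝ)) (Ψ ψ (t, y)) * ρξ y :=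
      Filter.Eventually.of_forall fun y =>
        mul_nonneg (Set.indicator_nonneg (fun _ _ => zero_le_one) _) (hρξ0 y)
    rw [integral_eq_lintegral_of_nonneg_ae hnn hmeasy.aestronglyMeasurable]
    congr 1
    refine lintegral_congr fun y => ?_
    by_cases h : Ψ ψ (t, y) ∈ O <;>
      simp [he, Set.indicator_of_mem, Set.indicator_of_notMem, h, ENNReal.ofReal_mul, hρξ0 y]
  -- Step B: the whole expression equals `(G ψ).toReal`
  have key : ∀ ψ,
      (∫ t in Set.Ioi (0 : ℝ),
        (∫ y, Set.indicator O (fun _ => (1 : ℝ)) (JL hN J y (flow M V t ψ)) * ρξ y) * ρτ t)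
        = (G ψ).toReal := by
    intro ψ
    have h1 : (∫ t in Set.Ioi (0 : ℝ),
        (∫ y, Set.indicator O (fun _ => (1 : ℝ)) (JL hN J y (flow M V t ψ)) * ρξ y) * ρτ t)
        = ∫ t, (K ψ t).toReal * ρτ t ∂μτ := by
      refine integral_congr_ae (Filter.Eventually.of_forall fun t => ?_)
      dsimp only
      rw [keyA ψ t]
    rw [h1]
    have hnn : 0 ≤ᵐ[μτ] fun t => (K ψ t).toReal * ρτ t :=
      Filter.Eventually.of_forall fun t => mul_nonneg ENNReal.toReal_nonneg (hρτ0 t)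
    have hmeast : Measurable fun t => (K ψ t).toReal * ρτ t :=
      ((hKmeas ψ).ennreal_toReal).mul hρτmeas
    rw [integral_eq_lintegral_of_nonneg_ae hnn hmeast.aestronglyMeasurable]
    congr 1
    refine lintegral_congr fun t => ?_
    rw [ENNReal.ofReal_mul ENNReal.toReal_nonneg, ENNReal.ofReal_toReal (hKne ψ t)]
  -- the integrand over the product space
  set H : Phase N d → ℝ × (Fin l → ℝ) → ENNReal := fun ψ z =>
    e (Ψ ψ z) * ENNReal.ofReal (ρξ z.2) * ENNReal.ofReal (ρτ z.1) with hH
  have hHmeas : ∀ ψ, Measurable (H ψ) := fun ψ =>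
    ((hemeas.comp (hΨmeas ψ)).mul
      ((ENNReal.measurable_ofReal.comp hρξmeas).comp measurable_snd)).mul
      ((ENNReal.measurable_ofReal.comp hρτmeas).comp measurable_fst)
  -- `G` as a product integral
  have hGprod : ∀ ψ, G ψ = ∫⁻ z, H ψ z ∂(μτ.prod volume) := by
    intro ψ
    rw [lintegral_prod _ (hHmeas ψ).aemeasurable]
    refine lintegral_congr fun t => ?_
    exact (lintegral_mul_const' (ENNReal.ofReal (ρτ t))
        (fun y => e (Ψ ψ (t, y)) * ENNReal.ofReal (ρξ y)) ENNReal.ofReal_ne_top).symm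
  -- pointwise lower semicontinuity in `ψ`
  have hlsc : ∀ z : ℝ × (Fin l → ℝ), LowerSemicontinuous fun ψ => H ψ z := by
    intro z
    have hcontΨ : Continuous fun ψ : Phase N d => Ψ ψ z :=
      (cont_JL hN J hJcont z.2).comp (cont_flow_psi M V z.1)
    have hrw : (fun ψ => H ψ z) = fun ψ =>
        Set.indicator O (fun _ => ENNReal.ofReal (ρξ z.2) * ENNReal.ofReal (ρτ z.1)) (Ψ ψ z) := by
      funext ψ
      by_cases h : Ψ ψ z ∈ O <;>
        simp [hH, he, Set.indicator_of_mem, Set.indicator_of_notMem, h, mul_assoc]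
    rw [hrw]
    exact LowerSemicontinuous.comp (hO.lowerSemicontinuous_indicator (zero_le)) hcontΨ
  -- the main lower-semicontinuity argument
  intro x c hc
  by_contra hcon
  rw [Filter.not_eventually] at hcon
  simp only [not_lt] at hcon
  obtain ⟨u, hu, hule⟩ := Filter.exists_seq_forall_of_frequently hcon
  have hc0 : 0 ≤ c := le_trans (by rw [key (u 0)]; exact ENNReal.toReal_nonneg) (hule 0)
  have hGu : ∀ n, G (u n) ≤ ENNReal.ofReal c := by
    intro n
    have h1 : ENNReal.ofReal ((G (u n)).toReal) = G (u n) := ENNReal.ofReal_toReal (hGne _)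
    calc G (u n) = ENNReal.ofReal ((G (u n)).toReal) := h1.symm
      _ ≤ ENNReal.ofReal c := ENNReal.ofReal_le_ofReal (by rw [← key (u n)]; exact hule n)
  have hfatou : G x ≤ Filter.atTop.liminf fun n => G (u n) := by
    rw [hGprod x]
    calc ∫⁻ z, H x z ∂(μτ.prod volume)
        ≤ ∫⁻ z, Filter.atTop.liminf (fun n => H (u n) z) ∂(μτ.prod volume) := by
          refine lintegral_mono fun z => ?_
          rw [Filter.le_liminf_iff]
          exact fun b hb => hu.eventually ((hlsc z x) b hb)
      _ ≤ Filter.atTop.liminf fun n => ∫⁻ z, H (u n) z ∂(μτ.prod volume) :=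
          lintegral_liminf_le fun n => hHmeas (u n)
      _ = Filter.atTop.liminf fun n => G (u n) := by simp_rw [← hGprod]
  have hGc : G x ≤ ENNReal.ofReal c := by
    refine hfatou.trans ?_
    calc Filter.atTop.liminf (fun n => G (u n))
        ≤ Filter.atTop.liminf (fun _ => ENNReal.ofReal c) :=
          Filter.liminf_le_liminf (Filter.Eventually.of_forall hGu)
      _ = ENNReal.ofReal c := Filter.liminf_const _
  have hFx : (∫ t in Set.Ioi (0 : ℝ),
      (∫ y, Set.indicator O (fun _ => (1 : ℝ)) (JL hN J y (flow M V t x)) * ρξ y) * ρτ t) ≤ c := by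
    rw [key x]
    calc (G x).toReal ≤ (ENNReal.ofReal c).toReal :=
        ENNReal.toReal_mono ENNReal.ofReal_ne_top hGc
      _ = c := ENNReal.toReal_ofReal hc0
  exact absurd hc (not_lt.mpr hFx)
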